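/- Let (G,X*) be a contracting self-similar action with tile T in the limit G-space and measure μ. Then the topological boundary ∂T of the tile T has μ-measure zero. -/

import Mathlib

open MeasureTheory ENNReal

/-- A self-similar action of the group `G` over the alphabet `X`, given by the action
`g(xw) = (toFun g x) ((res g x) w)` on words: `toFun g` is the action on the first letter and
`res g x = g|_x` is the restriction. -/
structure SSA (G X : Type*) [Group G] where
  toFun : G → X → X
  res : G → X → G
  toFun_one : ∀ x, toFun 1 x = x
  res_one : ∀ x, res 1 x = 1
  toFun_mul : ∀ g h x, toFun (g * h) x = toFun g (toFun h x)
  res_mul : ∀ g h x, res (g * h) x = res g (toFun h x) * res h x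

namespace SSA

variable {G X : Type*} [Group G]

/-- Restriction of `g` along a finite word (head of the list = first letter read):
`g|_{x₁x₂…xₙ} = g|_{x₁}|_{x₂}…|_{xₙ}`. -/
def resW (S : SSA G X) : G → List X → G
  | g, [] => g
  | g, x :: v => S.resW (S.res g x) v

/-- Action of `g` on a finite word (head of the list = first letter read):
`g(xw) = g(x) (g|_x)(w)`. -/
def actW (S : SSA G X) : G → List X → List X
  | _, [] => []
  | g, x :: v => S.toFun g x :: S.actW (S.res g x) v

/-- `N` is the nucleus of the (contracting) action: it is closed under restrictions, every
element restricts into `N` on all sufficiently long words, and it is the smallest such set. -/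
def IsNucleus (S : SSA G X) (N : Finset G) : Prop :=
  (∀ g ∈ N, ∀ x : X, S.res g x ∈ N) ∧
  (∀ g : G, ∃ k : ℕ, ∀ v : List X, k ≤ v.length → S.resW g v ∈ N) ∧
  ∀ N' : Finset G, (∀ g : G, ∃ k : ℕ, ∀ v : List X, k ≤ v.length → S.resW g v ∈ N') → N ⊆ N'

/-- There is a left-infinite path in the Moore diagram of the nucleus `N` which ends at the
vertex `h` and whose `i`-th edge is labeled `(w i, w' i)` (sequences are left-infinite,
index `0` being the rightmost letter): the vertices `q i ∈ N` satisfy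
`q (i+1)|_{w i} = q i` and `q (i+1) (w i) = w' i`, with `q 0 = h`. -/
def MoorePath (S : SSA G X) (N : Finset G) (w w' : ℕ → X) (h : G) : Prop :=
  ∃ q : ℕ → G, q 0 = h ∧ (∀ i, q i ∈ N) ∧
    ∀ i : ℕ, S.res (q (i + 1)) (w i) = q i ∧ S.toFun (q (i + 1)) (w i) = w' i

/-- The asymptotic equivalence relation on `X^{-ω} × G`: `w·g ~ w'·g'` iff there is a
left-infinite path in the Moore diagram of the nucleus labeled `(w, w')` ending at `g'g⁻¹`. -/
def AsympEquiv (S : SSA G X) (N : Finset G) (p q : (ℕ → X) × G) : Prop :=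
  S.MoorePath N p.1 q.1 (q.2 * p.2⁻¹)

/-- The limit `G`-space: the quotient of `X^{-ω} × G` by the asymptotic equivalence relation. -/
def LimitGSpace (S : SSA G X) (N : Finset G) : Type _ :=
  Quot (S.AsympEquiv N)

/-- The tile `𝒯_v ⊂ J_G` for a finite word `v` (encoded as a list whose head is the rightmost
letter): the image in the limit `G`-space of `X^{-ω}v × {1}`.  For `v = []` this is the tile `𝒯`,
the image of `X^{-ω} × {1}`. -/
def Tile (S : SSA G X) (N : Finset G) (v : List X) : Set (S.LimitGSpace N) :=
  Quot.mk (S.AsympEquiv N) ''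
    {p : (ℕ → X) × G | p.2 = 1 ∧ ∀ (i : ℕ) (h : i < v.length), p.1 i = v.get ⟨i, h⟩}

/-- The translated tile `𝒯·g`: the image in the limit `G`-space of `X^{-ω} × {g}`. -/
def TileT (S : SSA G X) (N : Finset G) (g : G) : Set (S.LimitGSpace N) :=
  Quot.mk (S.AsympEquiv N) '' {p : (ℕ → X) × G | p.2 = g}

variable [MeasurableSpace X] [MeasurableSpace G]

instance (S : SSA G X) (N : Finset G) : MeasurableSpace (S.LimitGSpace N) :=
  inferInstanceAs (MeasurableSpace (Quot (S.AsympEquiv N)))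

/-- The measure `μ` on the limit `G`-space: the push-forward under the quotient map of the
product of the (uniform Bernoulli) measure `μ0` on `X^{-ω}` and the counting measure on `G`. -/
noncomputable def limitMeasure (S : SSA G X) (N : Finset G) (μ0 : Measure (ℕ → X)) :
    Measure (S.LimitGSpace N) :=
  Measure.map (Quot.mk (S.AsympEquiv N)) (μ0.prod Measure.count)

end SSA

/-- The cylinder subset of `X^{-ω}` of sequences whose last `u.length` letters spell `u`
(head of `u` = rightmost letter). -/
def Cyl {X : Type*} (u : List X) : Set (ℕ → X) :=
  {w | ∀ (i : ℕ) (h : i < u.length), w i = u.get ⟨i, h⟩}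

instance {G X : Type*} [Group G] [TopologicalSpace X] [TopologicalSpace G]
    (S : SSA G X) (N : Finset G) : TopologicalSpace (S.LimitGSpace N) :=
  inferInstanceAs (TopologicalSpace (Quot (S.AsympEquiv N)))

namespace SSA

section Aux

variable {G X : Type*} [Group G]

/-! ### Basic algebra of self-similar actions -/

lemma toFun_inv_right (S : SSA G X) (g : G) (x : X) : S.toFun g (S.toFun g⁻¹ x) = x := by
  rw [← S.toFun_mul, mul_inv_cancel, S.toFun_one]

lemma toFun_inv_left (S : SSA G X) (g : G) (x : X) : S.toFun g⁻¹ (S.toFun g x) = x := by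
  rw [← S.toFun_mul, inv_mul_cancel, S.toFun_one]

lemma res_inv (S : SSA G X) (g : G) (x : X) :
    S.res g⁻¹ (S.toFun g x) = (S.res g x)⁻¹ := by
  have h := S.res_mul g⁻¹ g x
  rw [inv_mul_cancel, S.res_one] at h
  exact eq_inv_of_mul_eq_one_left h.symm

/-- the word `[w (i+m-1), ..., w (i+1), w i]` -/
def seg (w : ℕ → X) (i : ℕ) : ℕ → List X
  | 0 => []
  | m + 1 => w (i + m) :: seg w i m

lemma length_seg (w : ℕ → X) (i : ℕ) : ∀ m, (seg w i m).length = m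
  | 0 => rfl
  | m + 1 => by simp [seg, length_seg w i m]

lemma resW_seg (S : SSA G X) (q : ℕ → G) (w : ℕ → X)
    (hrun : ∀ i, S.res (q (i + 1)) (w i) = q i) (i : ℕ) :
    ∀ m, S.resW (q (i + m)) (seg w i m) = q i
  | 0 => rfl
  | m + 1 => by
    show S.resW (q (i + (m + 1))) (w (i + m) :: seg w i m) = q i
    have h1 : i + (m + 1) = (i + m) + 1 := rfl
    rw [h1]
    show S.resW (S.res (q ((i + m) + 1)) (w (i + m))) (seg w i m) = q i
    rw [hrun (i + m)]
    exact resW_seg S q w hrun i m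

lemma mem_nucleus_of_run (S : SSA G X) (N : Finset G) (hN : S.IsNucleus N)
    (F : Finset G) (q : ℕ → G) (w : ℕ → X)
    (hF : ∀ i, q i ∈ F) (hrun : ∀ i, S.res (q (i + 1)) (w i) = q i) (i : ℕ) :
    q i ∈ N := by
  classical
  set kk : G → ℕ := fun g => Classical.choose (hN.2.1 g) with hkk
  have hkspec : ∀ g (v : List X), kk g ≤ v.length → S.resW g v ∈ N :=
    fun g => Classical.choose_spec (hN.2.1 g)
  set K := F.sup kk with hK
  have h1 := resW_seg S q w hrun i K
  have h2 : kk (q (i + K)) ≤ (seg w i K).length := by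
    rw [length_seg]; exact Finset.le_sup (hF (i + K))
  have h3 := hkspec (q (i + K)) (seg w i K) h2
  rwa [h1] at h3

lemma one_mem_nucleus [Nonempty X] (S : SSA G X) (N : Finset G) (hN : S.IsNucleus N) :
    (1 : G) ∈ N := by
  classical
  exact mem_nucleus_of_run S N hN {1} (fun _ => 1) (fun _ => Classical.arbitrary X)
    (fun _ => Finset.mem_singleton_self 1) (fun _ => S.res_one _) 0

/-! ### Moore paths -/

lemma moorePath_refl (S : SSA G X) (N : Finset G) (h1 : (1 : G) ∈ N) (w : ℕ → X) :
    S.MoorePath N w w 1 :=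
  ⟨fun _ => 1, rfl, fun _ => h1, fun _ => ⟨S.res_one _, S.toFun_one _⟩⟩

lemma moorePath_symm (S : SSA G X) (N : Finset G) (hN : S.IsNucleus N)
    {w w' : ℕ → X} {h : G} (hp : S.MoorePath N w w' h) : S.MoorePath N w' w h⁻¹ := by
  obtain ⟨q, hq0, hqN, hq⟩ := hp
  have hrun : ∀ i, S.res ((q (i + 1))⁻¹) (w' i) = (q i)⁻¹ := by
    intro i
    rw [← (hq i).2, res_inv, (hq i).1]
  classical
  refine ⟨fun i => (q i)⁻¹, by show (q 0)⁻¹ = h⁻¹; rw [hq0], ?_, ?_⟩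
  · exact fun i => mem_nucleus_of_run S N hN (N.image (·⁻¹)) _ w'
      (fun i => Finset.mem_image_of_mem _ (hqN i)) hrun i
  · intro i
    refine ⟨hrun i, ?_⟩
    rw [← (hq i).2, toFun_inv_left]

lemma moorePath_comp (S : SSA G X) (N : Finset G) (hN : S.IsNucleus N)
    {w w' w'' : ℕ → X} {h h' : G}
    (h1 : S.MoorePath N w w' h) (h2 : S.MoorePath N w' w'' h') :
    S.MoorePath N w w'' (h' * h) := by
  classical
  obtain ⟨q, hq0, hqN, hq⟩ := h1
  obtain ⟨r, hr0, hrN, hr⟩ := h2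
  have hres : ∀ i, S.res (r (i + 1) * q (i + 1)) (w i) = r i * q i := by
    intro i
    rw [S.res_mul, (hq i).2, (hr i).1, (hq i).1]
  have htf : ∀ i, S.toFun (r (i + 1) * q (i + 1)) (w i) = w'' i := by
    intro i
    rw [S.toFun_mul, (hq i).2, (hr i).2]
  refine ⟨fun i => r i * q i, by show r 0 * q 0 = h' * h; rw [hq0, hr0], ?_, fun i => ⟨hres i, htf i⟩⟩
  exact fun i => mem_nucleus_of_run S N hN (Finset.image₂ (· * ·) N N) _ w
    (fun i => Finset.mem_image₂_of_mem (hrN i) (hqN i)) hres i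

lemma asympEquiv_equivalence [Nonempty X] (S : SSA G X) (N : Finset G) (hN : S.IsNucleus N) :
    Equivalence (S.AsympEquiv N) := by
  constructor
  · intro p
    show S.MoorePath N p.1 p.1 (p.2 * p.2⁻¹)
    rw [mul_inv_cancel]
    exact moorePath_refl S N (one_mem_nucleus S N hN) p.1
  · intro p q hpq
    show S.MoorePath N q.1 p.1 (p.2 * q.2⁻¹)
    have h := moorePath_symm S N hN hpq
    rw [show (q.2 * p.2⁻¹)⁻¹ = p.2 * q.2⁻¹ by group] at h
    exact h
  · intro p q r h1 h2
    show S.MoorePath N p.1 r.1 (r.2 * p.2⁻¹)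
    have h := moorePath_comp S N hN h1 h2
    rw [show r.2 * q.2⁻¹ * (q.2 * p.2⁻¹) = r.2 * p.2⁻¹ by group] at h
    exact h

lemma mk_eq_mk_iff [Nonempty X] (S : SSA G X) (N : Finset G) (hN : S.IsNucleus N)
    (p q : (ℕ → X) × G) :
    Quot.mk (S.AsympEquiv N) p = Quot.mk (S.AsympEquiv N) q ↔ S.AsympEquiv N p q :=
  Quot.eq.trans (asympEquiv_equivalence S N hN).eqvGen_iff

/-! ### Runs reading output letters -/

/-- The (deterministic, going down) step of the automaton reading the *output* letter `y`. -/
def ostep (S : SSA G X) (a : G) (y : X) : G := S.res a (S.toFun a⁻¹ y)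

/-- `w` is the output of a left-infinite path in `N` ending at `h`. -/
def EndsAt (S : SSA G X) (N : Finset G) (w : ℕ → X) (h : G) : Prop :=
  ∃ q : ℕ → G, q 0 = h ∧ (∀ i, q i ∈ N) ∧ ∀ i, S.ostep (q (i + 1)) (w i) = q i

/-- `w`'s first `n` letters are outputs of a path of length `n` in `N` ending at `h`. -/
def PEndsAt (S : SSA G X) (N : Finset G) (n : ℕ) (w : ℕ → X) (h : G) : Prop :=
  ∃ q : ℕ → G, q 0 = h ∧ (∀ i, q i ∈ N) ∧ ∀ i, i < n → S.ostep (q (i + 1)) (w i) = q i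

lemma endsAt_mem {S : SSA G X} {N : Finset G} {w : ℕ → X} {h : G}
    (he : S.EndsAt N w h) : h ∈ N := by
  obtain ⟨q, hq0, hqN, _⟩ := he
  exact hq0 ▸ hqN 0

lemma endsAt_iff_moorePath (S : SSA G X) (N : Finset G) (w' : ℕ → X) (h : G) :
    S.EndsAt N w' h ↔ ∃ w, S.MoorePath N w w' h := by
  constructor
  · rintro ⟨q, hq0, hqN, hq⟩
    exact ⟨fun i => S.toFun (q (i + 1))⁻¹ (w' i), q, hq0, hqN,
      fun i => ⟨hq i, toFun_inv_right S _ _⟩⟩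
  · rintro ⟨w, q, hq0, hqN, hq⟩
    refine ⟨q, hq0, hqN, fun i => ?_⟩
    show S.res (q (i + 1)) (S.toFun (q (i + 1))⁻¹ (w' i)) = q i
    rw [← (hq i).2, toFun_inv_left, (hq i).1]

lemma pEndsAt_of_endsAt {S : SSA G X} {N : Finset G} {n : ℕ} {w : ℕ → X} {h : G}
    (he : S.EndsAt N w h) : S.PEndsAt N n w h := by
  obtain ⟨q, hq0, hqN, hq⟩ := he
  exact ⟨q, hq0, hqN, fun i _ => hq i⟩

lemma pEndsAt_mono {S : SSA G X} {N : Finset G} {m n : ℕ} {w : ℕ → X} {h : G}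
    (hmn : m ≤ n) (he : S.PEndsAt N n w h) : S.PEndsAt N m w h := by
  obtain ⟨q, hq0, hqN, hq⟩ := he
  exact ⟨q, hq0, hqN, fun i hi => hq i (lt_of_lt_of_le hi hmn)⟩

lemma pEndsAt_congr {S : SSA G X} {N : Finset G} {n : ℕ} {w1 w2 : ℕ → X} {h : G}
    (hw : ∀ i, i < n → w1 i = w2 i) (he : S.PEndsAt N n w1 h) : S.PEndsAt N n w2 h := by
  obtain ⟨q, hq0, hqN, hq⟩ := he
  refine ⟨q, hq0, hqN, fun i hi => ?_⟩
  rw [← hw i hi]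
  exact hq i hi

/-! ### König's lemma -/

lemma exists_run_of_partial (step : G → X → G) (N : Finset G) (w : ℕ → X) (h : G)
    (H : ∀ n, ∃ q : ℕ → G, q 0 = h ∧ (∀ i, q i ∈ N) ∧
      ∀ i, i < n → step (q (i + 1)) (w i) = q i) :
    ∃ q : ℕ → G, q 0 = h ∧ (∀ i, q i ∈ N) ∧ ∀ i, step (q (i + 1)) (w i) = q i := by
  classical
  set V : ℕ → G → Prop := fun i g => ∀ n, ∃ q : ℕ → G,
    (q 0 = h ∧ (∀ j, q j ∈ N) ∧ ∀ j, j < n → step (q (j + 1)) (w j) = q j) ∧ q i = g with hV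
  have hV0 : V 0 h := fun n => ⟨(H n).choose, (H n).choose_spec, (H n).choose_spec.1⟩
  have key : ∀ i g, V i g → ∃ g', V (i + 1) g' ∧ step g' (w i) = g := by
    intro i g hg
    set Q : ℕ → (ℕ → G) := fun n => (hg n).choose with hQ
    have hQs : ∀ n, ((Q n) 0 = h ∧ (∀ j, Q n j ∈ N) ∧
        ∀ j, j < n → step (Q n (j + 1)) (w j) = Q n j) ∧ Q n i = g :=
      fun n => (hg n).choose_spec
    have hmem : ∀ n, Q n (i + 1) ∈ N := fun n => (hQs n).1.2.1 (i + 1)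
    obtain ⟨y, hy⟩ := Finite.exists_infinite_fiber
      (fun n : ℕ => (⟨Q n (i + 1), hmem n⟩ : {g // g ∈ N}))
    have hyInf : ((fun n : ℕ => (⟨Q n (i + 1), hmem n⟩ : {g // g ∈ N})) ⁻¹' {y}).Infinite :=
      Set.infinite_coe_iff.mp hy
    have hyval : ∀ n ∈ ((fun n : ℕ => (⟨Q n (i + 1), hmem n⟩ : {g // g ∈ N})) ⁻¹' {y}),
        Q n (i + 1) = (y : G) := by
      intro n hn
      have : (⟨Q n (i + 1), hmem n⟩ : {g // g ∈ N}) = y := hn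
      exact congrArg Subtype.val this
    refine ⟨(y : G), ?_, ?_⟩
    · intro n
      obtain ⟨b, hb, hnb⟩ := hyInf.exists_gt n
      refine ⟨Q b, ⟨(hQs b).1.1, (hQs b).1.2.1,
        fun j hj => (hQs b).1.2.2 j (hj.trans hnb)⟩, hyval b hb⟩
    · obtain ⟨b, hb, hib⟩ := hyInf.exists_gt i
      have hstep := (hQs b).1.2.2 i hib
      rw [hyval b hb] at hstep
      rw [hstep]
      exact (hQs b).2
  let Qb : ∀ i : ℕ, {g // V i g} := fun i =>
    Nat.rec ⟨h, hV0⟩ (fun i p => ⟨(key i p.1 p.2).choose, (key i p.1 p.2).choose_spec.1⟩) i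
  refine ⟨fun i => (Qb i).1, rfl, fun i => ?_, fun i => ?_⟩
  · obtain ⟨q, hq, hqi⟩ := (Qb i).2 0
    have hqn : q i ∈ N := hq.2.1 i
    rwa [hqi] at hqn
  · exact ((key i (Qb i).1 (Qb i).2).choose_spec).2

lemma endsAt_of_forall_pEndsAt {S : SSA G X} {N : Finset G} {w : ℕ → X} {h : G}
    (hp : ∀ n, S.PEndsAt N n w h) : S.EndsAt N w h :=
  exists_run_of_partial (S.ostep) N w h (fun n => hp n)

/-- Downward determinism of output-reading runs. -/
lemma run_det (S : SSA G X) (w : ℕ → X) :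
    ∀ (n : ℕ) (q r : ℕ → G),
      (∀ i, i < n → S.ostep (q (i + 1)) (w i) = q i) →
      (∀ i, i < n → S.ostep (r (i + 1)) (w i) = r i) →
      q n = r n → q 0 = r 0 := by
  intro n
  induction n with
  | zero => intro q r _ _ hqr; exact hqr
  | succ n ih =>
    intro q r hq hr hqr
    have hn : q n = r n := by
      rw [← hq n (Nat.lt_succ_self n), ← hr n (Nat.lt_succ_self n), hqr]
    exact ih q r (fun i hi => hq i (hi.trans (Nat.lt_succ_self n)))
      (fun i hi => hr i (hi.trans (Nat.lt_succ_self n))) hn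

/-! ### The finite sets of ends -/

noncomputable def Ends (S : SSA G X) (N : Finset G) (w : ℕ → X) : Finset G :=
  @Finset.filter G (S.EndsAt N w) (Classical.decPred _) N

noncomputable def PEnds (S : SSA G X) (N : Finset G) (n : ℕ) (w : ℕ → X) : Finset G :=
  @Finset.filter G (S.PEndsAt N n w) (Classical.decPred _) N

lemma mem_Ends {S : SSA G X} {N : Finset G} {w : ℕ → X} {h : G} :
    h ∈ S.Ends N w ↔ h ∈ N ∧ S.EndsAt N w h := by
  classical
  unfold Ends
  rw [Finset.mem_filter]

lemma mem_PEnds {S : SSA G X} {N : Finset G} {n : ℕ} {w : ℕ → X} {h : G} :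
    h ∈ S.PEnds N n w ↔ h ∈ N ∧ S.PEndsAt N n w h := by
  classical
  unfold PEnds
  rw [Finset.mem_filter]

lemma ends_subset_pEnds {S : SSA G X} {N : Finset G} {n : ℕ} {w : ℕ → X} :
    S.Ends N w ⊆ S.PEnds N n w := by
  intro h hh
  rw [mem_Ends] at hh
  rw [mem_PEnds]
  exact ⟨hh.1, pEndsAt_of_endsAt hh.2⟩

lemma pEnds_mono {S : SSA G X} {N : Finset G} {m n : ℕ} {w : ℕ → X} (hmn : m ≤ n) :
    S.PEnds N n w ⊆ S.PEnds N m w := by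
  intro h hh
  rw [mem_PEnds] at hh ⊢
  exact ⟨hh.1, pEndsAt_mono hmn hh.2⟩

lemma one_mem_Ends [Nonempty X] (S : SSA G X) (N : Finset G) (hN : S.IsNucleus N)
    (w : ℕ → X) : (1 : G) ∈ S.Ends N w := by
  rw [mem_Ends]
  exact ⟨one_mem_nucleus S N hN,
    (endsAt_iff_moorePath S N w 1).mpr ⟨w, moorePath_refl S N (one_mem_nucleus S N hN) w⟩⟩

lemma ends_card_le [Nonempty X] (S : SSA G X) (N : Finset G) (hN : S.IsNucleus N)
    {w w'' : ℕ → X} {h0 : G} (hp : S.MoorePath N w w'' h0) :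
    (S.Ends N w).card ≤ (S.Ends N w'').card := by
  apply Finset.card_le_card_of_injOn (fun h => h0 * h)
  · intro h hh
    rw [Finset.mem_coe, mem_Ends] at hh
    obtain ⟨w1, hw1⟩ := (endsAt_iff_moorePath S N w h).mp hh.2
    have hcomp := moorePath_comp S N hN hw1 hp
    have hmemN : h0 * h ∈ N := by
      obtain ⟨q, hq0, hqN, _⟩ := hcomp
      exact hq0 ▸ hqN 0
    rw [Finset.mem_coe, mem_Ends]
    exact ⟨hmemN, (endsAt_iff_moorePath S N w'' (h0 * h)).mpr ⟨w1, hcomp⟩⟩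
  · intro a _ b _ hab
    exact mul_left_cancel hab

lemma ends_card_eq [Nonempty X] (S : SSA G X) (N : Finset G) (hN : S.IsNucleus N)
    {w w'' : ℕ → X} {h0 : G} (hp : S.MoorePath N w w'' h0) :
    (S.Ends N w).card = (S.Ends N w'').card :=
  le_antisymm (ends_card_le S N hN hp) (ends_card_le S N hN (moorePath_symm S N hN hp))

end Aux

end SSA

namespace SSA

section Top

variable {G X : Type*} [Group G]

lemma tile_nil (S : SSA G X) (N : Finset G) : S.Tile N [] = S.TileT N 1 := by
  have h : {p : (ℕ → X) × G | p.2 = 1 ∧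
      ∀ (i : ℕ) (h : i < ([] : List X).length), p.1 i = ([] : List X).get ⟨i, h⟩} =
      {p : (ℕ → X) × G | p.2 = 1} := by
    ext p
    simp only [Set.mem_setOf_eq, List.length_nil, and_iff_left_iff_imp]
    intro _ i hi
    exact absurd hi (Nat.not_lt_zero i)
  unfold Tile TileT
  rw [h]

lemma mem_tileT_iff [Nonempty X] (S : SSA G X) (N : Finset G) (hN : S.IsNucleus N)
    (w : ℕ → X) (g k : G) :
    Quot.mk (S.AsympEquiv N) (w, g) ∈ S.TileT N k ↔ S.EndsAt N w (g * k⁻¹) := by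
  constructor
  · rintro ⟨p, hp2, hpq⟩
    replace hpq := (mk_eq_mk_iff S N hN _ _).mp hpq
    have hmp : S.MoorePath N p.1 w (g * p.2⁻¹) := hpq
    rw [endsAt_iff_moorePath]
    rw [Set.mem_setOf_eq] at hp2
    rw [← hp2]
    exact ⟨p.1, hmp⟩
  · intro he
    rw [endsAt_iff_moorePath] at he
    obtain ⟨w1, hw1⟩ := he
    exact ⟨(w1, k), rfl, (mk_eq_mk_iff S N hN _ _).mpr hw1⟩

lemma preimage_tileT [Nonempty X] (S : SSA G X) (N : Finset G) (hN : S.IsNucleus N) (k : G) :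
    Quot.mk (S.AsympEquiv N) ⁻¹' (S.TileT N k) =
      {p : (ℕ → X) × G | S.EndsAt N p.1 (p.2 * k⁻¹)} := by
  ext ⟨w, g⟩
  exact mem_tileT_iff S N hN w g k

variable [TopologicalSpace X] [DiscreteTopology X] [TopologicalSpace G] [DiscreteTopology G]

lemma isClosed_of_slices (A : Set ((ℕ → X) × G)) (hA : ∀ g : G, IsClosed {w | (w, g) ∈ A}) :
    IsClosed A := by
  rw [← isOpen_compl_iff, isOpen_iff_mem_nhds]
  rintro ⟨w, g⟩ hwg
  rw [nhds_prod_eq]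
  have h1 : {w | (w, g) ∈ A}ᶜ ∈ nhds w := (hA g).isOpen_compl.mem_nhds hwg
  have h2 : ({g} : Set G) ∈ nhds g := (isOpen_discrete _).mem_nhds rfl
  refine Filter.mem_of_superset (Filter.prod_mem_prod h1 h2) ?_
  rintro ⟨w', g'⟩ ⟨hw', hg'⟩
  have : g' = g := hg'
  subst this
  exact hw'

lemma isClosed_endsAt (S : SSA G X) (N : Finset G) (h : G) :
    IsClosed {w : ℕ → X | S.EndsAt N w h} := by
  rw [← isOpen_compl_iff, isOpen_iff_mem_nhds]
  intro w hw
  have hex : ∃ n, ¬ S.PEndsAt N n w h := by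
    by_contra hc
    push_neg at hc
    exact hw (endsAt_of_forall_pEndsAt hc)
  obtain ⟨n, hn⟩ := hex
  have hopen : IsOpen {v : ℕ → X | ∀ i, i < n → v i = w i} := by
    have heq : {v : ℕ → X | ∀ i, i < n → v i = w i} =
        ⋂ i ∈ Finset.range n, (fun v : ℕ → X => v i) ⁻¹' {w i} := by
      ext v
      simp [Finset.mem_range]
    rw [heq]
    exact isOpen_biInter_finset fun i _ =>
      (isOpen_discrete _).preimage (continuous_apply i)
  refine Filter.mem_of_superset (hopen.mem_nhds (fun i _ => rfl)) ?_
  intro v hv hv2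
  exact hn (pEndsAt_congr (fun i hi => hv i hi) (pEndsAt_of_endsAt hv2))

lemma isClosed_tileT [Nonempty X] (S : SSA G X) (N : Finset G) (hN : S.IsNucleus N) (k : G) :
    IsClosed (S.TileT N k) := by
  apply (isQuotientMap_quot_mk (r := S.AsympEquiv N)).isClosed_preimage.mp
  rw [preimage_tileT S N hN k]
  exact isClosed_of_slices _ (fun g => isClosed_endsAt S N (g * k⁻¹))

lemma mem_interior_tile [Nonempty X] (S : SSA G X) (N : Finset G) (hN : S.IsNucleus N)
    (w0 : ℕ → X) (hmin : ∀ w : ℕ → X, (S.Ends N w0).card ≤ (S.Ends N w).card) :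
    Quot.mk (S.AsympEquiv N) (w0, (1 : G)) ∈ interior (S.TileT N 1) := by
  classical
  set p : S.LimitGSpace N := Quot.mk (S.AsympEquiv N) (w0, (1 : G)) with hp
  set F := ⋃ k ∈ {k : G | p ∉ S.TileT N k}, S.TileT N k with hF
  have hFc : IsClosed F := by
    apply (isQuotientMap_quot_mk (r := S.AsympEquiv N)).isClosed_preimage.mp
    have hFeq : Quot.mk (S.AsympEquiv N) ⁻¹' F =
        {q : (ℕ → X) × G | ∃ k, p ∉ S.TileT N k ∧ S.EndsAt N q.1 (q.2 * k⁻¹)} := by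
      rw [hF]
      refine (Set.preimage_iUnion₂
        (f := (Quot.mk (S.AsympEquiv N) : (ℕ → X) × G → Quot (S.AsympEquiv N)))
        (s := fun k (_ : k ∈ {k : G | p ∉ S.TileT N k}) => S.TileT N k)).trans ?_
      ext q
      simp only [Set.mem_iUnion, Set.mem_setOf_eq]
      constructor
      · rintro ⟨k, hk, hq⟩
        rw [preimage_tileT S N hN k] at hq
        exact ⟨k, hk, hq⟩
      · rintro ⟨k, hk, hq⟩
        refine ⟨k, hk, ?_⟩
        rw [preimage_tileT S N hN k]
        exact hq
    rw [hFeq]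
    apply isClosed_of_slices
    intro g
    have hslice : {w | (w, g) ∈
        {q : (ℕ → X) × G | ∃ k, p ∉ S.TileT N k ∧ S.EndsAt N q.1 (q.2 * k⁻¹)}} =
        ⋃ h ∈ N.filter (fun h => p ∉ S.TileT N (h⁻¹ * g)), {w | S.EndsAt N w h} := by
      ext w
      simp only [Set.mem_setOf_eq, Set.mem_iUnion, Finset.mem_filter, exists_prop]
      constructor
      · rintro ⟨k, hk, he⟩
        refine ⟨g * k⁻¹, ⟨endsAt_mem he, ?_⟩, he⟩
        rw [show (g * k⁻¹)⁻¹ * g = k by group]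
        exact hk
      · rintro ⟨h, ⟨_, hk⟩, he⟩
        refine ⟨h⁻¹ * g, hk, ?_⟩
        rw [show g * (h⁻¹ * g)⁻¹ = h by group]
        exact he
    rw [hslice]
    exact isClosed_biUnion_finset (fun h _ => isClosed_endsAt S N h)
  have hpF : p ∉ F := by
    rw [hF]
    intro hmem
    rw [Set.mem_iUnion₂] at hmem
    obtain ⟨k, hk, hmem⟩ := hmem
    exact hk hmem
  refine mem_interior.mpr ?_
  refine ⟨Fᶜ, ?_, hFc.isOpen_compl, hpF⟩
  intro η hη
  obtain ⟨⟨w, g⟩, rfl⟩ := Quot.exists_rep η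
  have hmap : ∀ h ∈ S.Ends N w, g⁻¹ * h ∈ S.Ends N w0 := by
    intro h hh
    rw [mem_Ends] at hh
    have hmemT : Quot.mk (S.AsympEquiv N) (w, g) ∈ S.TileT N (h⁻¹ * g) := by
      rw [mem_tileT_iff S N hN]
      rw [show g * (h⁻¹ * g)⁻¹ = h by group]
      exact hh.2
    have hpT : p ∈ S.TileT N (h⁻¹ * g) := by
      by_contra hc
      exact hη (Set.mem_biUnion hc hmemT)
    rw [hp] at hpT
    replace hpT := (mem_tileT_iff S N hN _ _ _).mp hpT
    rw [show (1 : G) * (h⁻¹ * g)⁻¹ = g⁻¹ * h by group] at hpT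
    rw [mem_Ends]
    exact ⟨endsAt_mem hpT, hpT⟩
  have hinj : Set.InjOn (fun h => g⁻¹ * h) (S.Ends N w) := fun a _ b _ hab =>
    mul_left_cancel hab
  have hcard : (S.Ends N w0).card = (S.Ends N w).card :=
    le_antisymm (hmin w) (Finset.card_le_card_of_injOn _ hmap hinj)
  have himage : (S.Ends N w).image (fun h => g⁻¹ * h) = S.Ends N w0 := by
    apply Finset.eq_of_subset_of_card_le
    · intro x hx
      rw [Finset.mem_image] at hx
      obtain ⟨h, hh, rfl⟩ := hx
      exact hmap h hh
    · rw [Finset.card_image_of_injOn hinj, hcard]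
  have h1 : (1 : G) ∈ (S.Ends N w).image (fun h => g⁻¹ * h) := by
    rw [himage]
    exact one_mem_Ends S N hN w0
  rw [Finset.mem_image] at h1
  obtain ⟨h, hh, hgh⟩ := h1
  have hhg : h = g := by
    have := inv_mul_eq_one.mp hgh
    exact this.symm
  refine (mem_tileT_iff S N hN _ _ _).mpr ?_
  rw [show g * (1 : G)⁻¹ = g by group]
  rw [mem_Ends] at hh
  rw [← hhg]
  exact hh.2

end Top

end SSA

namespace SSA

section Comb

variable {G X : Type*} [Group G]

lemma card_ends_le_of_block (S : SSA G X) (N : Finset G) (wst w : ℕ → X) (K j : ℕ)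
    (hblock : ∀ t, t < K → w (j + t) = wst t) :
    (S.Ends N w).card ≤ (S.PEnds N K wst).card := by
  classical
  have hch : ∀ h ∈ S.Ends N w, ∃ q : ℕ → G, q 0 = h ∧ (∀ i, q i ∈ N) ∧
      ∀ i, S.ostep (q (i + 1)) (w i) = q i := by
    intro h hh
    exact (mem_Ends.mp hh).2
  choose! Q hQ0 hQN hQrun using hch
  apply Finset.card_le_card_of_injOn (fun h => Q h j)
  · intro h hh
    rw [Finset.mem_coe, mem_PEnds]
    refine ⟨hQN h hh j, fun i => Q h (j + i), rfl, fun i => hQN h hh (j + i), ?_⟩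
    intro i hi
    have hr := hQrun h hh (j + i)
    show S.ostep (Q h (j + (i + 1))) (wst i) = Q h (j + i)
    rw [← hblock i hi]
    have hidx : j + (i + 1) = (j + i) + 1 := by omega
    rw [hidx]
    exact hr
  · intro a ha b hb hab
    have hdet := run_det S w j (Q a) (Q b) (fun i _ => hQrun a ha i)
      (fun i _ => hQrun b hb i) hab
    rw [hQ0 a ha, hQ0 b hb] at hdet
    exact hdet

lemma pEnds_eventually_eq (S : SSA G X) (N : Finset G) (w : ℕ → X) :
    ∃ K : ℕ, S.PEnds N K w = S.Ends N w := by
  classical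
  have hne : (Set.range fun n => (S.PEnds N n w).card).Nonempty := Set.range_nonempty _
  obtain ⟨K, hK⟩ := Set.mem_range.mp (Nat.sInf_mem hne)
  refine ⟨K, ?_⟩
  apply Finset.Subset.antisymm ?_ ends_subset_pEnds
  intro h hh0
  have hh := mem_PEnds.mp hh0
  rw [mem_Ends]
  refine ⟨hh.1, endsAt_of_forall_pEndsAt ?_⟩
  intro n
  rcases le_or_gt n K with hnK | hKn
  · exact pEndsAt_mono hnK hh.2
  · have hsub : S.PEnds N n w ⊆ S.PEnds N K w := pEnds_mono hKn.le
    have hcard : (S.PEnds N K w).card ≤ (S.PEnds N n w).card := by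
      rw [hK]; exact Nat.sInf_le ⟨n, rfl⟩
    have heq : S.PEnds N n w = S.PEnds N K w := Finset.eq_of_subset_of_card_le hsub hcard
    have hh2 : h ∈ S.PEnds N n w := by rw [heq]; exact hh0
    exact (mem_PEnds.mp hh2).2

lemma exists_min_block [Nonempty X] (S : SSA G X) (N : Finset G) :
    ∃ (m : ℕ) (wst : ℕ → X) (K : ℕ),
      (∀ w : ℕ → X, m ≤ (S.Ends N w).card) ∧
      (S.Ends N wst).card = m ∧
      (S.PEnds N K wst).card = m := by
  have hne : (Set.range fun w : ℕ → X => (S.Ends N w).card).Nonempty := Set.range_nonempty _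
  obtain ⟨wst, hwst⟩ := Set.mem_range.mp (Nat.sInf_mem hne)
  obtain ⟨K, hK⟩ := pEnds_eventually_eq S N wst
  exact ⟨_, wst, K, fun w => Nat.sInf_le (Set.mem_range_self w), hwst, by rw [hK, hwst]⟩

end Comb

section MeasZero

variable {X : Type*} [Fintype X] [Nonempty X] [MeasurableSpace X]

lemma Cyl_nil : Cyl ([] : List X) = Set.univ := by
  ext w
  simp only [Cyl, List.length_nil, Set.mem_setOf_eq, Set.mem_univ, iff_true]
  intro i hi
  exact absurd hi (Nat.not_lt_zero i)

lemma ennreal_frac_lt_one (n : ℕ) (hn : 1 ≤ n) :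
    ((n - 1 : ℕ) : ℝ≥0∞) * ((n : ℝ≥0∞))⁻¹ < 1 := by
  have hb0 : (n : ℝ≥0∞) ≠ 0 := Nat.cast_ne_zero.mpr (by omega)
  have hbt : (n : ℝ≥0∞) ≠ ⊤ := ENNReal.natCast_ne_top n
  rw [← div_eq_mul_inv]
  rw [ENNReal.div_lt_iff (Or.inl hb0) (Or.inl hbt), one_mul]
  exact_mod_cast Nat.sub_lt (by omega) (by omega)

lemma mem_Cyl_ofFn {n : ℕ} (f : Fin n → X) (w : ℕ → X)
    (h : ∀ i : Fin n, w (i : ℕ) = f i) : w ∈ Cyl (List.ofFn f) := by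
  intro i hi
  have hi' : i < n := by
    rw [List.length_ofFn] at hi
    exact hi
  have hval := h ⟨i, hi'⟩
  rw [List.get_ofFn]
  rw [show (Fin.cast (List.length_ofFn (f := f)) (⟨i, hi⟩ : Fin (List.ofFn f).length)) = ⟨i, hi'⟩ from
    Fin.ext rfl]
  exact hval

/-- A set all of whose elements avoid a fixed pattern on all aligned blocks is null. -/
lemma measure_bad_zero (μ0 : MeasureTheory.Measure (ℕ → X))
    (hμ0 : ∀ u : List X, μ0 (Cyl u) = ((Fintype.card X : ℝ≥0∞))⁻¹ ^ u.length)
    (wst : ℕ → X) (K : ℕ) (Bad : Set (ℕ → X))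
    (hB : ∀ w ∈ Bad, ∀ j : ℕ, ∃ t, t < K ∧ w (j * K + t) ≠ wst t) :
    μ0 Bad = 0 := by
  classical
  rcases Nat.eq_zero_or_pos K with hK0 | hKpos
  · have : Bad = ∅ := by
      ext w
      simp only [Set.mem_empty_iff_false, iff_false]
      intro hw
      obtain ⟨t, ht, _⟩ := hB w hw 0
      omega
    rw [this]
    exact MeasureTheory.measure_empty
  set a := Fintype.card X with ha
  have hapos : 1 ≤ a := Fintype.card_pos
  have haKpos : 1 ≤ a ^ K := Nat.one_le_pow _ _ (by omega)
  set x : ℝ≥0∞ := ((a ^ K - 1 : ℕ) : ℝ≥0∞) * (((a : ℝ≥0∞)) ^ K)⁻¹ with hx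
  have hxlt : x < 1 := by
    have := ennreal_frac_lt_one (a ^ K) haKpos
    rw [hx]
    rw [show ((a : ℝ≥0∞)) ^ K = ((a ^ K : ℕ) : ℝ≥0∞) by push_cast; ring]
    exact this
  have hbound : ∀ M : ℕ, μ0 Bad ≤ x ^ M := by
    intro M
    -- the finset of bad block patterns
    set wstK : Fin K → X := fun t => wst t with hwstK
    set VM : Finset (Fin M → Fin K → X) :=
      Finset.univ.filter (fun v => ∀ j : Fin M, v j ≠ wstK) with hVM
    -- flatten a pattern into a list of length M * K
    have hdiv : ∀ i : Fin (M * K), (i : ℕ) / K < M := by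
      intro i
      rw [Nat.div_lt_iff_lt_mul hKpos]
      exact i.2
    have hmod : ∀ i : Fin (M * K), (i : ℕ) % K < K := fun i => Nat.mod_lt _ hKpos
    -- covering
    have hcov : Bad ⊆ ⋃ v ∈ VM, Cyl (List.ofFn
        (fun i : Fin (M * K) => v ⟨(i : ℕ) / K, hdiv i⟩ ⟨(i : ℕ) % K, hmod i⟩)) := by
      intro w hw
      set v : Fin M → Fin K → X := fun j t => w ((j : ℕ) * K + (t : ℕ)) with hv
      have hvVM : v ∈ VM := by
        rw [hVM, Finset.mem_filter]
        refine ⟨Finset.mem_univ _, ?_⟩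
        intro j heq
        obtain ⟨t, ht, hne⟩ := hB w hw (j : ℕ)
        apply hne
        exact congrFun heq ⟨t, ht⟩
      refine Set.mem_biUnion hvVM ?_
      apply mem_Cyl_ofFn
      intro i
      show w (i : ℕ) = w (((i : ℕ) / K) * K + (i : ℕ) % K)
      have hidx : ((i : ℕ) / K) * K + (i : ℕ) % K = (i : ℕ) := by
        rw [mul_comm]
        exact Nat.div_add_mod _ K
      rw [hidx]
    -- cardinality bound
    have hcard : VM.card ≤ (a ^ K - 1) ^ M := by
      have hcoe : VM.card = Fintype.card {v // v ∈ VM} := (Fintype.card_coe VM).symm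
      have hinj : Function.Injective
          (fun (v : {v // v ∈ VM}) (j : Fin M) =>
            (⟨v.1 j, (Finset.mem_filter.mp v.2).2 j⟩ : {y : Fin K → X // y ≠ wstK})) := by
        intro v1 v2 h12
        apply Subtype.ext
        funext j
        exact congrArg Subtype.val (congrFun h12 j)
      have hle := Fintype.card_le_of_injective _ hinj
      rw [hcoe]
      refine hle.trans (le_of_eq ?_)
      rw [Fintype.card_pi, Finset.prod_const]
      have hsub : Fintype.card {y : Fin K → X // y ≠ wstK} = a ^ K - 1 := by
        have h1 : Fintype.card {y : Fin K → X // ¬ (y = wstK)} =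
            Fintype.card (Fin K → X) - Fintype.card {y : Fin K → X // y = wstK} :=
          Fintype.card_subtype_compl _
        have h2 : Fintype.card {y : Fin K → X // y = wstK} = 1 := Fintype.card_subtype_eq _
        have h3 : Fintype.card (Fin K → X) = a ^ K := by
          rw [Fintype.card_fun, Fintype.card_fin, ha]
        have h0 : Fintype.card {y : Fin K → X // y ≠ wstK} =
            Fintype.card {y : Fin K → X // ¬ (y = wstK)} :=
          Fintype.card_congr (Equiv.subtypeEquivRight (fun _ => Iff.rfl))
        rw [h0, h1, h2, h3]
      rw [hsub, Finset.card_univ, Fintype.card_fin]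
    -- sum up
    calc μ0 Bad ≤ μ0 (⋃ v ∈ VM, Cyl (List.ofFn
          (fun i : Fin (M * K) => v ⟨(i : ℕ) / K, hdiv i⟩ ⟨(i : ℕ) % K, hmod i⟩))) :=
        MeasureTheory.measure_mono hcov
      _ ≤ ∑ v ∈ VM, μ0 (Cyl (List.ofFn
          (fun i : Fin (M * K) => v ⟨(i : ℕ) / K, hdiv i⟩ ⟨(i : ℕ) % K, hmod i⟩))) :=
        MeasureTheory.measure_biUnion_finset_le VM _
      _ = ∑ _v ∈ VM, ((a : ℝ≥0∞))⁻¹ ^ (M * K) := by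
          apply Finset.sum_congr rfl
          intro v _
          rw [hμ0, List.length_ofFn, ha]
      _ = (VM.card : ℝ≥0∞) * ((a : ℝ≥0∞))⁻¹ ^ (M * K) := by
          rw [Finset.sum_const, nsmul_eq_mul]
      _ ≤ (((a ^ K - 1) ^ M : ℕ) : ℝ≥0∞) * ((a : ℝ≥0∞))⁻¹ ^ (M * K) := by
          apply mul_le_mul_left
          exact_mod_cast Nat.cast_le.mpr hcard
      _ = x ^ M := by
          rw [hx, mul_comm M K, pow_mul, Nat.cast_pow, ← mul_pow]
          congr 2
          rw [ENNReal.inv_pow]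
  have htend := ENNReal.tendsto_pow_atTop_nhds_zero_of_lt_one hxlt
  have hle := ge_of_tendsto' htend hbound
  exact le_antisymm hle zero_le

end MeasZero

end SSA

namespace SSA

section Sing

open MeasureTheory

variable {X : Type*} [Fintype X] [Nonempty X] [MeasurableSpace X]

lemma measurableSet_singleton_of_cyl (μ0 : Measure (ℕ → X))
    (hμ0 : ∀ u : List X, μ0 (Cyl u) = ((Fintype.card X : ℝ≥0∞))⁻¹ ^ u.length)
    (x : X) : MeasurableSet ({x} : Set X) := by
  classical
  have hsep : ∀ y : X, y ≠ x → ∃ s : Set X, MeasurableSet s ∧ x ∈ s ∧ y ∉ s := by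
    intro y hyx
    by_contra hcon
    push_neg at hcon
    have hcon2 : ∀ s : Set X, MeasurableSet s → (x ∈ s ↔ y ∈ s) := by
      intro s hm
      constructor
      · exact hcon s hm
      · intro hy
        by_contra hx
        exact (hcon sᶜ hm.compl hx) hy
    set σf : X → X := fun z => if z = x then y else if z = y then x else z with hσf
    have hσx : σf x = y := by simp [hσf]
    have hσy : σf y = x := by simp [hσf, hyx]
    have hσz : ∀ z, z ≠ x → z ≠ y → σf z = z := by
      intro z h1 h2
      simp [hσf, h1, h2]
    have hσpre : ∀ s : Set X, MeasurableSet s → σf ⁻¹' s = s := by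
      intro s hm
      ext z
      simp only [Set.mem_preimage]
      by_cases hzx : z = x
      · rw [hzx, hσx]
        exact (hcon2 s hm).symm
      · by_cases hzy : z = y
        · rw [hzy, hσy]
          exact hcon2 s hm
        · rw [hσz z hzx hzy]
    set τ : (ℕ → X) → (ℕ → X) := fun w i => if i = 0 then σf (w 0) else w i with hτ
    have hinv : ∀ B : Set (ℕ → X), MeasurableSet B → τ ⁻¹' B = B := by
      intro B hB
      let m' : MeasurableSpace (ℕ → X) :=
        { MeasurableSet' := fun A => MeasurableSet A ∧ τ ⁻¹' A = A
          measurableSet_empty := ⟨MeasurableSet.empty, by simp⟩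
          measurableSet_compl := fun A hA => ⟨hA.1.compl, by
            rw [Set.preimage_compl, hA.2]⟩
          measurableSet_iUnion := fun f hf => ⟨MeasurableSet.iUnion (fun i => (hf i).1), by
            rw [Set.preimage_iUnion]
            exact Set.iUnion_congr fun i => (hf i).2⟩ }
      have hle : (MeasurableSpace.pi : MeasurableSpace (ℕ → X)) ≤ m' := by
        refine iSup_le ?_
        intro i
        intro s hs
        obtain ⟨s', hs', rfl⟩ := hs
        refine ⟨(measurable_pi_apply i) hs', ?_⟩
        ext w
        simp only [Set.mem_preimage, hτ]
        by_cases hi : i = 0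
        · subst hi
          show σf (w 0) ∈ s' ↔ w 0 ∈ s'
          have hpre := hσpre s' hs'
          constructor
          · intro h
            have h2 : w 0 ∈ σf ⁻¹' s' := h
            rwa [hpre] at h2
          · intro h
            have h2 : w 0 ∈ σf ⁻¹' s' := by rw [hpre]; exact h
            exact h2
        · simp only [if_neg hi]
      exact (hle B hB).2
    have hq1 : μ0 Set.univ = 1 := by
      have h := hμ0 []
      rw [Cyl_nil] at h
      simpa using h
    have hAx : ∀ z : X, μ0 (toMeasurable μ0 (Cyl [z])) = ((Fintype.card X : ℝ≥0∞))⁻¹ := by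
      intro z
      rw [measure_toMeasurable]
      have h := hμ0 [z]
      simpa using h
    have hcov : (Set.univ : Set (ℕ → X)) ⊆
        ⋃ z ∈ Finset.univ.erase y, toMeasurable μ0 (Cyl [z]) := by
      intro w _
      by_cases h0 : w 0 = y
      · refine Set.mem_biUnion (Finset.mem_erase.mpr ⟨Ne.symm hyx, Finset.mem_univ x⟩) ?_
        have h1 : τ w ∈ Cyl [x] := by
          intro i hi
          have hi0 : i = 0 := by
            simp only [List.length_singleton] at hi
            omega
          subst hi0
          show σf (w 0) = x
          rw [h0, hσy]
        have h2 := subset_toMeasurable μ0 (Cyl [x]) h1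
        have h3 := hinv (toMeasurable μ0 (Cyl [x])) (measurableSet_toMeasurable μ0 _)
        rw [← h3]
        exact h2
      · refine Set.mem_biUnion (Finset.mem_erase.mpr ⟨h0, Finset.mem_univ _⟩) ?_
        apply subset_toMeasurable
        intro i hi
        have hi0 : i = 0 := by
          simp only [List.length_singleton] at hi
          omega
        subst hi0
        rfl
    have hcard : (Finset.univ.erase y).card = Fintype.card X - 1 := by
      rw [Finset.card_erase_of_mem (Finset.mem_univ y), Finset.card_univ]
    have hle1 : (1 : ℝ≥0∞) ≤
        ((Fintype.card X - 1 : ℕ) : ℝ≥0∞) * ((Fintype.card X : ℝ≥0∞))⁻¹ := by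
      calc (1 : ℝ≥0∞) = μ0 Set.univ := hq1.symm
        _ ≤ μ0 (⋃ z ∈ Finset.univ.erase y, toMeasurable μ0 (Cyl [z])) := measure_mono hcov
        _ ≤ ∑ z ∈ Finset.univ.erase y, μ0 (toMeasurable μ0 (Cyl [z])) :=
          measure_biUnion_finset_le _ _
        _ = ((Finset.univ.erase y).card : ℝ≥0∞) * ((Fintype.card X : ℝ≥0∞))⁻¹ := by
            rw [Finset.sum_congr rfl (fun z _ => hAx z), Finset.sum_const, nsmul_eq_mul]
        _ = _ := by rw [hcard]
    exact absurd (lt_of_le_of_lt hle1 (ennreal_frac_lt_one _ Fintype.card_pos))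
      (lt_irrefl _)
  choose! s hs hxs hys using hsep
  have hxeq : ({x} : Set X) = ⋂ y ∈ {y : X | y ≠ x}, s y := by
    ext z
    simp only [Set.mem_singleton_iff, Set.mem_iInter, Set.mem_setOf_eq]
    constructor
    · intro hz y hy
      subst hz
      exact hxs y hy
    · intro hz
      by_contra hzx
      exact hys z hzx (hz z hzx)
  rw [hxeq]
  exact MeasurableSet.biInter (Set.to_countable _) fun y hy => hs y hy

end Sing

end SSA

namespace SSA

section BadMeas

open MeasureTheory

variable {G X : Type*} [Group G] [Fintype X] [Nonempty X] [MeasurableSpace X]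

lemma measurableSet_bad (S : SSA G X) (N : Finset G)
    (hsing : ∀ x : X, MeasurableSet ({x} : Set X)) (m : ℕ) :
    MeasurableSet {w : ℕ → X | (S.Ends N w).card ≠ m} := by
  classical
  have hall : ∀ (n : ℕ) (s : Set (Fin n → X)), MeasurableSet s := by
    intro n s
    have hsingleton : ∀ v : Fin n → X, MeasurableSet ({v} : Set (Fin n → X)) := by
      intro v
      have hv : ({v} : Set (Fin n → X)) = ⋂ i, (fun f : Fin n → X => f i) ⁻¹' {v i} := by
        ext f
        simp [funext_iff]
      rw [hv]
      exact MeasurableSet.iInter fun i => (measurable_pi_apply i) (hsing (v i))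
    have hs : s = ⋃ v ∈ s, {v} := by simp
    rw [hs]
    exact MeasurableSet.biUnion (Set.to_countable s) fun v _ => hsingleton v
  have hPE : ∀ (n : ℕ) (h : G), MeasurableSet {w : ℕ → X | S.PEndsAt N n w h} := by
    intro n h
    have key : {w : ℕ → X | S.PEndsAt N n w h} =
        (fun w : ℕ → X => (fun i : Fin n => w (i : ℕ))) ⁻¹'
          {v : Fin n → X | S.PEndsAt N n
            (fun j => if hj : j < n then v ⟨j, hj⟩ else Classical.arbitrary X) h} := by
      ext w
      simp only [Set.mem_setOf_eq, Set.mem_preimage]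
      constructor
      · intro hw
        apply pEndsAt_congr ?_ hw
        intro i hi
        simp [hi]
      · intro hw
        apply pEndsAt_congr ?_ hw
        intro i hi
        simp [hi]
    rw [key]
    exact (measurable_pi_lambda _ fun i => measurable_pi_apply _) (hall n _)
  have hE : ∀ h : G, MeasurableSet {w : ℕ → X | S.EndsAt N w h} := by
    intro h
    have heq : {w : ℕ → X | S.EndsAt N w h} = ⋂ n, {w | S.PEndsAt N n w h} := by
      ext w
      simp only [Set.mem_iInter, Set.mem_setOf_eq]
      exact ⟨fun hw n => pEndsAt_of_endsAt hw, endsAt_of_forall_pEndsAt⟩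
    rw [heq]
    exact MeasurableSet.iInter fun n => hPE n h
  have hEq : ∀ s : Finset G, s ⊆ N → MeasurableSet {w : ℕ → X | S.Ends N w = s} := by
    intro s hsN
    have heq : {w : ℕ → X | S.Ends N w = s} =
        ⋂ h ∈ (N : Set G), (if h ∈ s then {w : ℕ → X | S.EndsAt N w h}
          else {w : ℕ → X | S.EndsAt N w h}ᶜ) := by
      ext w
      simp only [Set.mem_setOf_eq, Set.mem_iInter]
      constructor
      · intro hw h hh
        by_cases hs : h ∈ s
        · rw [if_pos hs]
          rw [← hw] at hs
          exact (mem_Ends.mp hs).2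
        · rw [if_neg hs]
          intro hE2
          apply hs
          rw [← hw]
          exact mem_Ends.mpr ⟨hh, hE2⟩
      · intro hw
        apply Finset.ext
        intro h
        constructor
        · intro hh
          have hhN := (mem_Ends.mp hh).1
          have hcond := hw h hhN
          by_cases hs : h ∈ s
          · exact hs
          · rw [if_neg hs] at hcond
            exact absurd (mem_Ends.mp hh).2 hcond
        · intro hh
          have hhN : h ∈ N := hsN hh
          have hcond := hw h hhN
          rw [if_pos hh] at hcond
          exact mem_Ends.mpr ⟨hhN, hcond⟩
    rw [heq]
    refine MeasurableSet.biInter (Finset.countable_toSet N) ?_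
    intro h _
    by_cases hs : h ∈ s
    · rw [if_pos hs]; exact hE h
    · rw [if_neg hs]; exact (hE h).compl
  have hfinal : {w : ℕ → X | (S.Ends N w).card ≠ m} =
      ⋃ s ∈ ((N.powerset.filter (fun s => s.card ≠ m) : Finset (Finset G)) : Set (Finset G)),
        {w : ℕ → X | S.Ends N w = s} := by
    ext w
    simp only [Set.mem_setOf_eq, Set.mem_iUnion, Finset.coe_filter, Finset.mem_powerset,
      exists_prop, Set.mem_setOf_eq]
    constructor
    · intro hw
      refine ⟨S.Ends N w, ⟨?_, hw⟩, rfl⟩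
      intro h hh
      exact (mem_Ends.mp hh).1
    · rintro ⟨s, ⟨_, hcard⟩, hws⟩
      rw [hws]
      exact hcard
  rw [hfinal]
  refine MeasurableSet.biUnion (Finset.countable_toSet _) ?_
  intro s hs
  rw [Finset.mem_coe, Finset.mem_filter] at hs
  exact hEq s (Finset.mem_powerset.mp hs.1)

end BadMeas

section Final

open MeasureTheory

variable {G X : Type*} [Group G]

lemma preimage_image_bad [Nonempty X] (S : SSA G X) (N : Finset G) (hN : S.IsNucleus N)
    (m : ℕ) :
    Quot.mk (S.AsympEquiv N) ⁻¹' (Quot.mk (S.AsympEquiv N) ''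
      ({w : ℕ → X | (S.Ends N w).card ≠ m} ×ˢ (Set.univ : Set G))) =
      {w : ℕ → X | (S.Ends N w).card ≠ m} ×ˢ (Set.univ : Set G) := by
  apply Set.Subset.antisymm
  · rintro ⟨w, g⟩ hmem
    rw [Set.mem_preimage] at hmem
    obtain ⟨⟨w', g'⟩, hw', heq⟩ := hmem
    rw [mk_eq_mk_iff S N hN] at heq
    have hmp : S.MoorePath N w' w (g * g'⁻¹) := heq
    refine ⟨?_, trivial⟩
    show (S.Ends N w).card ≠ m
    rw [← ends_card_eq S N hN hmp]
    exact hw'.1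
  · exact Set.subset_preimage_image _ _

variable [TopologicalSpace X] [DiscreteTopology X] [TopologicalSpace G] [DiscreteTopology G]

lemma frontier_subset_bad [Nonempty X] (S : SSA G X) (N : Finset G) (hN : S.IsNucleus N)
    (m : ℕ) (hmin : ∀ w : ℕ → X, m ≤ (S.Ends N w).card) :
    frontier (S.TileT N 1) ⊆
      Quot.mk (S.AsympEquiv N) ''
        ({w : ℕ → X | (S.Ends N w).card ≠ m} ×ˢ (Set.univ : Set G)) := by
  intro p hp
  have hpT : p ∈ S.TileT N 1 := by
    have h1 : p ∈ closure (S.TileT N 1) := frontier_subset_closure hp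
    rwa [(isClosed_tileT S N hN 1).closure_eq] at h1
  obtain ⟨⟨w0, g0⟩, hg0, heq⟩ := hpT
  by_cases hbad : (S.Ends N w0).card ≠ m
  · exact ⟨(w0, g0), ⟨hbad, trivial⟩, heq⟩
  · exfalso
    push_neg at hbad
    have hmin0 : ∀ w : ℕ → X, (S.Ends N w0).card ≤ (S.Ends N w).card := by
      intro w
      rw [hbad]
      exact hmin w
    have hint := mem_interior_tile S N hN w0 hmin0
    have hg0' : g0 = 1 := hg0
    have hp1 : p ∈ interior (S.TileT N 1) := by
      rw [← heq, hg0']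
      exact hint
    exact hp.2 hp1

end Final

end SSA

/-- The topological boundary of the tile `𝒯` in the limit `G`-space has measure zero. -/
theorem stmt_15 {G X : Type*} [Group G] [Fintype X] [Nonempty X]
    [TopologicalSpace X] [DiscreteTopology X] [TopologicalSpace G] [DiscreteTopology G]
    [MeasurableSpace X] [MeasurableSpace G] [MeasurableSingletonClass G] [Countable G]
    (S : SSA G X) (N : Finset G) (hN : S.IsNucleus N)
    (μ0 : Measure (ℕ → X))
    (hμ0 : ∀ u : List X, μ0 (Cyl u) = ((Fintype.card X : ℝ≥0∞))⁻¹ ^ u.length) :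
    S.limitMeasure N μ0 (frontier (S.Tile N [])) = 0 := by
  classical
  have hsing : ∀ x : X, MeasurableSet ({x} : Set X) :=
    fun x => SSA.measurableSet_singleton_of_cyl μ0 hμ0 x
  obtain ⟨m, wst, K, hmin, hwst, hKm⟩ := SSA.exists_min_block S N
  have hBadMeas : MeasurableSet {w : ℕ → X | (S.Ends N w).card ≠ m} :=
    SSA.measurableSet_bad S N hsing m
  have hBadBlocks : ∀ w ∈ {w : ℕ → X | (S.Ends N w).card ≠ m}, ∀ j : ℕ,
      ∃ t, t < K ∧ w (j * K + t) ≠ wst t := by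
    intro w hw j
    by_contra hc
    push_neg at hc
    apply hw
    apply le_antisymm
    · calc (S.Ends N w).card ≤ (S.PEnds N K wst).card :=
          SSA.card_ends_le_of_block S N wst w K (j * K) hc
        _ = m := hKm
    · exact hmin w
  have hBad0 : μ0 {w : ℕ → X | (S.Ends N w).card ≠ m} = 0 :=
    SSA.measure_bad_zero μ0 hμ0 wst K _ hBadBlocks
  have hsat := SSA.preimage_image_bad S N hN m
  have hfr := SSA.frontier_subset_bad S N hN m hmin
  haveI : SFinite (Measure.count : Measure G) := by
    unfold Measure.count
    infer_instance
  have hmeas2 : MeasurableSet (Quot.mk (S.AsympEquiv N) ''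
      ({w : ℕ → X | (S.Ends N w).card ≠ m} ×ˢ (Set.univ : Set G))) := by
    have hpre : MeasurableSet (Quot.mk (S.AsympEquiv N) ⁻¹' (Quot.mk (S.AsympEquiv N) ''
        ({w : ℕ → X | (S.Ends N w).card ≠ m} ×ˢ (Set.univ : Set G)))) := by
      rw [hsat]
      exact hBadMeas.prod MeasurableSet.univ
    exact hpre
  rw [SSA.tile_nil]
  have hchain : S.limitMeasure N μ0 (frontier (S.TileT N 1)) ≤ 0 := by
    unfold SSA.limitMeasure
    calc Measure.map (Quot.mk (S.AsympEquiv N)) (μ0.prod Measure.count)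
          (frontier (S.TileT N 1))
        ≤ Measure.map (Quot.mk (S.AsympEquiv N)) (μ0.prod Measure.count)
          (Quot.mk (S.AsympEquiv N) ''
            ({w : ℕ → X | (S.Ends N w).card ≠ m} ×ˢ (Set.univ : Set G))) :=
        measure_mono hfr
      _ = (μ0.prod Measure.count) (Quot.mk (S.AsympEquiv N) ⁻¹'
          (Quot.mk (S.AsympEquiv N) ''
            ({w : ℕ → X | (S.Ends N w).card ≠ m} ×ˢ (Set.univ : Set G)))) :=
        Measure.map_apply measurable_quot_mk hmeas2
      _ = (μ0.prod Measure.count)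
          ({w : ℕ → X | (S.Ends N w).card ≠ m} ×ˢ (Set.univ : Set G)) := by rw [hsat]
      _ = μ0 {w : ℕ → X | (S.Ends N w).card ≠ m} * Measure.count (Set.univ : Set G) :=
        Measure.prod_prod _ _
      _ = 0 := by rw [hBad0, zero_mul]
  exact le_antisymm hchain zero_le
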